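/- Let T be a tree whose vertex set is unbounded in the graph metric and whose automorphism group Aut(T) has only finitely many orbits on the vertex set. Then Aut(T) contains a hyperbolic element: there exist an automorphism g of T, a bi-infinite geodesic γ : ℤ → V(T), and an integer n > 0 such that g(γ(i)) = γ(i + n) for all i ∈ ℤ. -/

import Mathlib

variable {V : Type*}

/-- A bi-infinite geodesic in a graph: a map `γ : ℤ → V` such that the graph distance
between `γ m` and `γ n` is `|m - n|`. -/
def IsBiInfGeodesic (T : SimpleGraph V) (γ : ℤ → V) : Prop :=
  ∀ m n : ℤ, T.dist (γ m) (γ n) = (m - n).natAbs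

open SimpleGraph


lemma aux_iso_dist {T : SimpleGraph V} (hc : T.Connected) (φ : T ≃g T) (u v : V) :
    T.dist (φ u) (φ v) = T.dist u v := by
  have key : ∀ (ψ : T ≃g T) (a b : V), T.dist (ψ a) (ψ b) ≤ T.dist a b := by
    intro ψ a b
    obtain ⟨w, hw⟩ := hc.exists_walk_length_eq_dist a b
    calc T.dist (ψ a) (ψ b) ≤ (w.map ψ.toHom).length := SimpleGraph.dist_le _
      _ = w.length := Walk.length_map _ _
      _ = T.dist a b := hw
  refine le_antisymm (key φ u v) ?_
  have := key φ.symm (φ u) (φ v)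
  simpa using this

lemma aux_zpow_adj {T : SimpleGraph V} (g : T ≃g T) (q : ℤ) (u v : V) :
    T.Adj ((g.toEquiv ^ q) u) ((g.toEquiv ^ q) v) ↔ T.Adj u v := by
  induction q using Int.induction_on generalizing u v with
  | zero => simp
  | succ k ih =>
      rw [zpow_add_one]
      simp only [Equiv.Perm.mul_apply]
      rw [ih]
      exact g.map_adj_iff
  | pred k ih =>
      rw [zpow_sub_one]
      simp only [Equiv.Perm.mul_apply]
      have h : ∀ x : V, (g.toEquiv)⁻¹ x = g.symm x := fun x => rfl
      rw [h, h, ih]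
      exact g.symm.map_adj_iff

-- distances along a shortest walk
lemma aux_getVert_dist {T : SimpleGraph V} (hc : T.Connected)
    {u v : V} (w : T.Walk u v) (hw : w.length = T.dist u v)
    {s t : ℕ} (hst : s ≤ t) (ht : t ≤ w.length) :
    T.dist (w.getVert s) (w.getVert t) = t - s := by
  have upper : ∀ s t : ℕ, s ≤ t → t ≤ w.length →
      T.dist (w.getVert s) (w.getVert t) ≤ t - s := by
    intro s t hst ht
    induction t with
    | zero => simp [Nat.le_zero.mp hst, SimpleGraph.dist_self]
    | succ t iht =>
        rcases Nat.lt_or_ge s (t+1) with hlt | hge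
        · have hs : s ≤ t := by omega
          have h1 : T.dist (w.getVert t) (w.getVert (t+1)) ≤ 1 :=
            SimpleGraph.dist_eq_one_iff_adj.mpr (w.adj_getVert_succ (by omega)) |>.le
          have := hc.dist_triangle (u := w.getVert s) (v := w.getVert t) (w := w.getVert (t+1))
          have := iht hs (by omega)
          omega
        · have : s = t + 1 := by omega
          simp [this, SimpleGraph.dist_self]
  have h1 : T.dist u (w.getVert s) ≤ s := by
    have := upper 0 s (Nat.zero_le s) (le_trans hst ht)
    simpa [w.getVert_zero] using this
  have h2 : T.dist (w.getVert t) v ≤ w.length - t := by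
    have := upper t w.length ht le_rfl
    simpa [w.getVert_length] using this
  have h3 := upper s t hst ht
  have tri1 := hc.dist_triangle (u := u) (v := w.getVert s) (w := v)
  have tri2 := hc.dist_triangle (u := w.getVert s) (v := w.getVert t) (w := v)
  omega


/-- In a tree, every path realizes the distance. -/
lemma aux_path_length {T : SimpleGraph V} (htree : T.IsTree) {a b : V}
    (p : T.Walk a b) (hp : p.IsPath) : p.length = T.dist a b := by
  obtain ⟨q, hq, hql⟩ := htree.isConnected.exists_path_of_dist a b
  have : (⟨p, hp⟩ : T.Path a b) = ⟨q, hq⟩ := htree.IsAcyclic.path_unique _ _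
  rw [show p = q from congrArg Subtype.val this, hql]

/-- The Y-lemma: gluing geodesics at a branch vertex in a tree. -/
lemma aux_Y {T : SimpleGraph V} (htree : T.IsTree) {x y y' z : V} (m : ℕ)
    (hyy' : T.Adj y y') (hyz : T.Adj y z) (hne : y' ≠ z)
    (hxy : T.dist x y = m + 1) (hxy' : T.dist x y' = m) :
    T.dist x z = m + 2 := by
  classical
  have hc := htree.isConnected
  -- generic: a path from x to a neighbor c of y with length ≤ m+1 avoids y, unless y = c
  have havoid : ∀ (c : V), T.Adj y c → ∀ (P : T.Walk x c), P.IsPath →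
      P.length ≤ m + 1 → y ∉ P.support := by
    intro c hyc P hP hPl hy
    have h1 : (P.takeUntil y hy).length = m + 1 := by
      rw [aux_path_length htree _ (hP.takeUntil hy), hxy]
    have h2 := congrArg Walk.length (P.take_spec hy)
    rw [Walk.length_append] at h2
    have h3 : (P.dropUntil y hy).length = 0 := by omega
    exact hyc.ne (Walk.eq_of_length_eq_zero h3)
  have hub : T.dist x z ≤ m + 2 := by
    have t1 := hc.dist_triangle (u := x) (v := y) (w := z)
    have : T.dist y z = 1 := SimpleGraph.dist_eq_one_iff_adj.mpr hyz
    omega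
  have hlb : m + 1 ≤ T.dist x z + 1 := by
    have t1 := hc.dist_triangle (u := x) (v := z) (w := y)
    have : T.dist z y = 1 := SimpleGraph.dist_eq_one_iff_adj.mpr hyz.symm
    omega
  have notA : T.dist x z ≠ m + 1 := by
    intro hA
    obtain ⟨P, hP, hPl⟩ := hc.exists_path_of_dist x z
    rw [hA] at hPl
    have hy : y ∉ P.support := havoid z hyz P hP (le_of_eq hPl)
    set Q : T.Walk x y := (Walk.cons hyz P.reverse).reverse with hQ
    have hQp : Q.IsPath := by
      rw [hQ, Walk.isPath_reverse_iff, Walk.cons_isPath_iff]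
      exact ⟨(Walk.isPath_reverse_iff P).mpr hP, by simpa [Walk.support_reverse] using hy⟩
    have := aux_path_length htree Q hQp
    rw [hxy] at this
    simp only [hQ, Walk.length_reverse, Walk.length_cons] at this
    omega
  have notB : T.dist x z ≠ m := by
    intro hB
    obtain ⟨P2, hP2, hP2l⟩ := hc.exists_path_of_dist x z
    obtain ⟨P1, hP1, hP1l⟩ := hc.exists_path_of_dist x y'
    rw [hB] at hP2l
    rw [hxy'] at hP1l
    have hy2 : y ∉ P2.support := havoid z hyz P2 hP2 (by omega)
    have hy1 : y ∉ P1.support := havoid y' hyy' P1 hP1 (by omega)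
    set Q1 : T.Walk x y := (Walk.cons hyy' P1.reverse).reverse with hQ1
    set Q2 : T.Walk x y := (Walk.cons hyz P2.reverse).reverse with hQ2
    have hQ1p : Q1.IsPath := by
      rw [hQ1, Walk.isPath_reverse_iff, Walk.cons_isPath_iff]
      exact ⟨(Walk.isPath_reverse_iff P1).mpr hP1, by simpa [Walk.support_reverse] using hy1⟩
    have hQ2p : Q2.IsPath := by
      rw [hQ2, Walk.isPath_reverse_iff, Walk.cons_isPath_iff]
      exact ⟨(Walk.isPath_reverse_iff P2).mpr hP2, by simpa [Walk.support_reverse] using hy2⟩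
    have heq : Q1 = Q2 := by
      have : (⟨Q1, hQ1p⟩ : T.Path x y) = ⟨Q2, hQ2p⟩ := htree.IsAcyclic.path_unique _ _
      exact congrArg Subtype.val this
    have heqr : Walk.cons hyy' P1.reverse = Walk.cons hyz P2.reverse := by
      have := congrArg Walk.reverse heq
      simpa [hQ1, hQ2] using this
    have hsup := congrArg Walk.support heqr
    rw [Walk.support_cons, Walk.support_cons, P1.reverse.support_eq_cons,
      P2.reverse.support_eq_cons] at hsup
    rw [List.cons.injEq, List.cons.injEq] at hsup
    exact hne hsup.2.1
  omega

lemma aux_construct {T : SimpleGraph V} (htree : T.IsTree) (g : T ≃g T)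
    (n : ℕ) (hn : 0 < n) (p : ℕ → V)
    (hd : ∀ s t : ℕ, s ≤ t → t ≤ n → T.dist (p s) (p t) = t - s)
    (hadj : ∀ r : ℕ, r < n → T.Adj (p r) (p (r + 1)))
    (hg0 : g (p 0) = p n) (hnb : g (p 1) ≠ p (n - 1)) :
    ∃ γ : ℤ → V, IsBiInfGeodesic T γ ∧ ∀ i : ℤ, g (γ i) = γ (i + n) := by
  set e : Equiv.Perm V := g.toEquiv with he
  have hnz : (0:ℤ) < (n:ℤ) := by exact_mod_cast hn
  set γ : ℤ → V := fun i => (e ^ (i / (n:ℤ))) (p (i % (n:ℤ)).toNat) with hγ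
  have hge : ∀ x : V, g x = e x := fun _ => rfl
  -- H0 for r < n
  have H0' : ∀ q r : ℤ, 0 ≤ r → r < (n:ℤ) → γ (q * n + r) = (e ^ q) (p r.toNat) := by
    intro q r hr0 hlt
    have hdiv : (q * (n:ℤ) + r) / n = q := by
      rw [add_comm, Int.add_mul_ediv_right _ _ (by omega : (n:ℤ) ≠ 0),
        Int.ediv_eq_zero_of_lt hr0 hlt, zero_add]
    have hmod : (q * (n:ℤ) + r) % n = r := by
      rw [add_comm, Int.add_mul_emod_self_right]
      exact Int.emod_eq_of_lt hr0 hlt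
    rw [hγ]
    simp only [hdiv, hmod]
  have H0 : ∀ q r : ℤ, 0 ≤ r → r ≤ (n:ℤ) → γ (q * n + r) = (e ^ q) (p r.toNat) := by
    intro q r hr0 hrn
    rcases lt_or_eq_of_le hrn with hlt | heq
    · exact H0' q r hr0 hlt
    · subst heq
      have h1 : q * (n:ℤ) + n = (q+1) * n + 0 := by ring
      rw [h1, H0' (q+1) 0 le_rfl hnz, zpow_add_one]
      simp only [Equiv.Perm.mul_apply, Int.toNat_zero, Int.toNat_natCast]
      rw [← hge, hg0]
  -- decomposition of an arbitrary integer
  have Hdec : ∀ i : ℤ, i = (i / (n:ℤ)) * n + i % n :=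
    fun i => by rw [mul_comm]; exact (Int.mul_ediv_add_emod i n).symm
  have Hmod0 : ∀ i : ℤ, 0 ≤ i % (n:ℤ) := fun i => Int.emod_nonneg i (by omega)
  have Hmodn : ∀ i : ℤ, i % (n:ℤ) < n := fun i => Int.emod_lt_of_pos i hnz
  -- translation
  have H1 : ∀ i : ℤ, γ (i + n) = g (γ i) := by
    intro i
    set q := i / (n:ℤ); set r := i % (n:ℤ)
    have h1 : i + (n:ℤ) = (q + 1) * n + r := by rw [Hdec i]; ring
    rw [h1, H0 (q+1) r (Hmod0 i) (le_of_lt (Hmodn i)),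
      show γ i = (e ^ q) (p r.toNat) from by rw [Hdec i]; exact H0' q r (Hmod0 i) (Hmodn i),
      hge, show q + 1 = 1 + q from by ring, zpow_one_add]
    simp [Equiv.Perm.mul_apply]
  -- adjacency of consecutive vertices
  have H3 : ∀ i : ℤ, T.Adj (γ i) (γ (i + 1)) := by
    intro i
    set q := i / (n:ℤ); set r := i % (n:ℤ)
    have h1 : i + 1 = q * n + (r + 1) := by rw [Hdec i]; ring
    have h2 : γ i = (e ^ q) (p r.toNat) := by rw [Hdec i]; exact H0' q r (Hmod0 i) (Hmodn i)
    have h3 : γ (i+1) = (e ^ q) (p (r+1).toNat) := by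
      rw [h1]; exact H0 q (r+1) (by have := Hmod0 i; omega) (by have := Hmodn i; omega)
    rw [h2, h3, show (r+1).toNat = r.toNat + 1 from by have := Hmod0 i; omega,
      aux_zpow_adj]
    exact hadj r.toNat (by have := Hmodn i; have := Hmod0 i; omega)
  -- no backtracking anywhere
  have H4 : ∀ i : ℤ, γ (i + 1) ≠ γ (i - 1) := by
    intro i
    set q := i / (n:ℤ) with hq; set r := i % (n:ℤ) with hr
    have hr0 := Hmod0 i; have hrn := Hmodn i
    have h3 : γ (i+1) = (e ^ q) (p (r+1).toNat) := by
      rw [show i + 1 = q * n + (r + 1) from by rw [Hdec i]; ring]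
      exact H0 q (r+1) (by omega) (by omega)
    rcases lt_or_ge 0 r with hr1 | hr1
    · have h4 : γ (i-1) = (e ^ q) (p (r-1).toNat) := by
        rw [show i - 1 = q * n + (r - 1) from by rw [Hdec i]; ring]
        exact H0 q (r-1) (by omega) (by omega)
      rw [h3, h4]
      intro heq
      have heq2 := (e ^ q).injective heq
      have hdd : T.dist (p (r-1).toNat) (p (r+1).toNat) = 2 := by
        rw [hd (r-1).toNat (r+1).toNat (by omega) (by omega)]; omega
      rw [← heq2] at hdd
      simp [SimpleGraph.dist_self] at hdd
    · have hre : r = 0 := by omega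
      have h4 : γ (i-1) = (e ^ (q-1)) (p (n-1)) := by
        rw [show i - 1 = (q-1) * n + ((n:ℤ) - 1) from by
          rw [Hdec i, ← hq, ← hr, hre]; ring]
        rw [H0 (q-1) ((n:ℤ)-1) (by omega) (by omega),
          show ((n:ℤ) - 1).toNat = n - 1 from by omega]
      rw [h3, h4, show (r+1).toNat = 1 from by rw [hre]; norm_num]
      intro heq
      have hq1 : e ^ q = e ^ (q-1) * e := by rw [← zpow_add_one]; ring_nf
      rw [hq1] at heq
      simp only [Equiv.Perm.mul_apply] at heq
      have := (e ^ (q-1)).injective heq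
      rw [← hge] at this
      exact hnb (by simpa using this)
  -- distances
  have H5 : ∀ N : ℕ, ∀ i : ℤ, T.dist (γ i) (γ (i + N)) = N := by
    intro N
    induction N using Nat.strong_induction_on with
    | _ N ih =>
      intro i
      match N with
      | 0 => simp [SimpleGraph.dist_self]
      | 1 => exact SimpleGraph.dist_eq_one_iff_adj.mpr (by simpa using H3 i)
      | (N+2) =>
        have hxy : T.dist (γ i) (γ (i + N + 1)) = N + 1 := by
          have h := ih (N+1) (by omega) i
          rw [show (((N+1 : ℕ)):ℤ) = (N:ℤ)+1 from by push_cast; ring,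
            show i + ((N:ℤ)+1) = i + N + 1 from by ring] at h
          exact h
        have hxy' : T.dist (γ i) (γ (i + N)) = N := ih N (by omega) i
        have hyy' : T.Adj (γ (i + N + 1)) (γ (i + N)) := by
          have := H3 (i + N); rw [show i + (N:ℤ) + 1 = i + N + 1 from by ring] at this
          exact this.symm
        have hyz : T.Adj (γ (i + N + 1)) (γ (i + N + 2)) := by
          have := H3 (i + N + 1); rw [show i + (N:ℤ) + 1 + 1 = i + N + 2 from by ring] at this
          exact this
        have hne : γ (i + N) ≠ γ (i + N + 2) := by
          have := H4 (i + N + 1)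
          rw [show i + (N:ℤ) + 1 + 1 = i + N + 2 from by ring,
            show i + (N:ℤ) + 1 - 1 = i + N from by ring] at this
          exact this.symm
        have := aux_Y htree N hyy' hyz hne hxy hxy'
        rw [show (((N+2 : ℕ)):ℤ) = (N:ℤ)+2 from by push_cast; ring,
          show i + ((N:ℤ)+2) = i + N + 2 from by ring]
        exact this
  refine ⟨γ, ?_, fun i => (H1 i).symm⟩
  intro a b
  rcases le_total b a with h | h
  · rw [SimpleGraph.dist_comm, show γ a = γ (b + ((a - b).natAbs : ℤ)) from
      congrArg γ (by omega), H5]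
  · rw [show γ b = γ (a + ((a - b).natAbs : ℤ)) from congrArg γ (by omega), H5]

/-- **Claim inside the proof of Lemma `tprime`.** A tree with unbounded vertex set whose
automorphism group has finitely many orbits of vertices admits a hyperbolic automorphism:
an automorphism translating some bi-infinite geodesic by a positive amount. -/
theorem exists_hyperbolic_automorphism (T : SimpleGraph V) (htree : T.IsTree)
    (hunbounded : ¬ ∃ C : ℕ, ∀ u v : V, T.dist u v ≤ C)
    (horbits : ∃ F : Set V, F.Finite ∧ ∀ v : V, ∃ φ : T ≃g T, φ v ∈ F) :
    ∃ (g : T ≃g T) (γ : ℤ → V) (n : ℤ), 0 < n ∧ IsBiInfGeodesic T γ ∧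
      ∀ i : ℤ, g (γ i) = γ (i + n) := by
  classical
  have hc := htree.isConnected
  obtain ⟨F, hFfin, hφ⟩ := horbits
  choose Φ hΦ using hφ
  push_neg at hunbounded
  set k := hFfin.toFinset.card with hk
  obtain ⟨u, v, huv⟩ := hunbounded (2 * k + 1)
  obtain ⟨w, hw⟩ := hc.exists_walk_length_eq_dist u v
  set x : ℕ → V := w.getVert with hx
  have hN : 2 * k + 1 < w.length := by rw [hw]; exact huv
  -- pigeonhole: three indices in [0, 2k] with the same image in F
  have hmaps : ∀ i ∈ Finset.range (2 * k + 1),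
      (fun i => Φ (x i) (x i)) i ∈ hFfin.toFinset := by
    intro i _
    simp only [Set.Finite.mem_toFinset]
    exact hΦ (x i)
  have hcard : hFfin.toFinset.card * 2 < (Finset.range (2 * k + 1)).card := by
    rw [Finset.card_range]; omega
  obtain ⟨y, _, hy⟩ :=
    Finset.exists_lt_card_fiber_of_mul_lt_card_of_maps_to hmaps hcard
  set fib := Finset.filter (fun i => Φ (x i) (x i) = y) (Finset.range (2 * k + 1)) with hfib
  have h3 : 3 ≤ fib.card := hy
  have hne1 : fib.Nonempty := Finset.card_pos.mp (by omega)
  set a := fib.min' hne1 with ha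
  have hamem : a ∈ fib := fib.min'_mem hne1
  have hne2 : (fib.erase a).Nonempty := Finset.card_pos.mp (by
    rw [Finset.card_erase_of_mem hamem]; omega)
  set b := (fib.erase a).min' hne2 with hb
  have hbmem' : b ∈ fib.erase a := (fib.erase a).min'_mem hne2
  have hbmem : b ∈ fib := Finset.mem_of_mem_erase hbmem'
  have hne3 : ((fib.erase a).erase b).Nonempty := Finset.card_pos.mp (by
    rw [Finset.card_erase_of_mem hbmem', Finset.card_erase_of_mem hamem]; omega)
  set c := ((fib.erase a).erase b).min' hne3 with hcdef
  have hcmem'' : c ∈ (fib.erase a).erase b := ((fib.erase a).erase b).min'_mem hne3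
  have hcmem' : c ∈ fib.erase a := Finset.mem_of_mem_erase hcmem''
  have hcmem : c ∈ fib := Finset.mem_of_mem_erase hcmem'
  have hab : a < b := lt_of_le_of_ne (fib.min'_le b hbmem)
    (Ne.symm (Finset.ne_of_mem_erase hbmem'))
  have hbc : b < c := lt_of_le_of_ne ((fib.erase a).min'_le c hcmem')
    (Ne.symm (Finset.ne_of_mem_erase hcmem''))
  have hfa : Φ (x a) (x a) = y := (Finset.mem_filter.mp hamem).2
  have hfb : Φ (x b) (x b) = y := (Finset.mem_filter.mp hbmem).2
  have hfc : Φ (x c) (x c) = y := (Finset.mem_filter.mp hcmem).2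
  have hcr : c < 2 * k + 1 := Finset.mem_range.mp (Finset.mem_filter.mp hcmem).1
  have hcN : c + 1 ≤ w.length := by omega
  -- the three candidate automorphisms
  set g1 : T ≃g T := (Φ (x a)).trans (Φ (x b)).symm with hg1
  set g2 : T ≃g T := (Φ (x b)).trans (Φ (x c)).symm with hg2
  have hg1a : g1 (x a) = x b := by
    show (Φ (x b)).symm (Φ (x a) (x a)) = x b
    rw [hfa, ← hfb]
    exact (Φ (x b)).symm_apply_apply (x b)
  have hg2b : g2 (x b) = x c := by
    show (Φ (x c)).symm (Φ (x b) (x b)) = x c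
    rw [hfb, ← hfc]
    exact (Φ (x c)).symm_apply_apply (x c)
  have hdist : ∀ s t : ℕ, s ≤ t → t ≤ w.length → T.dist (x s) (x t) = t - s :=
    fun s t hst ht => aux_getVert_dist hc w hw hst ht
  have hadjx : ∀ r : ℕ, r < w.length → T.Adj (x r) (x (r + 1)) :=
    fun r hr => w.adj_getVert_succ hr
  -- package: given good data, conclude
  have finish : ∀ (g : T ≃g T) (a' n' : ℕ), 0 < n' → a' + n' + 1 ≤ w.length →
      g (x a') = x (a' + n') → g (x (a' + 1)) ≠ x (a' + n' - 1) →
      ∃ (g : T ≃g T) (γ : ℤ → V) (m : ℤ), 0 < m ∧ IsBiInfGeodesic T γ ∧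
        ∀ i : ℤ, g (γ i) = γ (i + m) := by
    intro g a' n' hn' hbound hga hgnb
    obtain ⟨γ, hγ, htr⟩ := aux_construct htree g n' hn' (fun r => x (a' + r))
      (fun s t hst htn => by
        rw [hdist (a' + s) (a' + t) (by omega) (by omega)]; omega)
      (fun r hr => by
        have := hadjx (a' + r) (by omega)
        rwa [show a' + r + 1 = a' + (r + 1) from by ring] at this)
      (by simpa using hga)
      (by show g (x (a' + 1)) ≠ x (a' + (n' - 1))
          rw [show a' + (n' - 1) = a' + n' - 1 from by omega]; exact hgnb)
    exact ⟨g, γ, (n' : ℤ), by exact_mod_cast hn', hγ, htr⟩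
  by_cases hb1 : g1 (x (a + 1)) = x (b - 1)
  · by_cases hb2 : g2 (x (b + 1)) = x (c - 1)
    · -- both backtrack: use g2 ∘ g1 from a to c
      refine finish (g1.trans g2) a (c - a) (by omega) (by omega) ?_ ?_
      · show g2 (g1 (x a)) = x (a + (c - a))
        rw [hg1a, hg2b, show a + (c - a) = c from by omega]
      · show g2 (g1 (x (a + 1))) ≠ x (a + (c - a) - 1)
        rw [hb1, show a + (c - a) - 1 = c - 1 from by omega, ← hb2]
        intro heq
        have := g2.injective heq
        have hdd : T.dist (x (b-1)) (x (b+1)) = 2 := by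
          rw [hdist (b-1) (b+1) (by omega) (by omega)]; omega
        rw [this] at hdd
        simp [SimpleGraph.dist_self] at hdd
    · -- g2 does not backtrack: use g2 from b to c
      refine finish g2 b (c - b) (by omega) (by omega) ?_ ?_
      · rwa [show b + (c - b) = c from by omega]
      · rwa [show b + (c - b) - 1 = c - 1 from by omega]
  · -- g1 does not backtrack: use g1 from a to b
    refine finish g1 a (b - a) (by omega) (by omega) ?_ ?_
    · rwa [show a + (b - a) = b from by omega]
    · rwa [show a + (b - a) - 1 = b - 1 from by omega]
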